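/- Let F be a probability distribution on ℝ with compact support, a > 0, b > 0, α ∈ (0,1), and S(x,y) = h^α_{a,b}(x−y) the generalized Huber loss score. If t ∈ H^α_{a,b}(F) and x ∈ ℝ, then E_F S(t,Y) ≤ E_F S(x,Y); i.e., generalized Huber loss is consistent for the Huber functional. -/

import Mathlib

set_option maxHeartbeats 1000000


open Set MeasureTheory

/-- The generalized Huber loss `h^α_{a,b}`. -/
noncomputable def genHuber (α a b u : ℝ) : ℝ :=
  if u < -a then -α * a * (u + a / 2)
  else if b < u then (1 - α) * b * (u - b / 2)
  else |(if 0 ≤ u then (1 : ℝ) else 0) - α| * u ^ 2 / 2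




lemma gh_left {α a b u : ℝ} (h : u < -a) : genHuber α a b u = -α * a * (u + a / 2) := by
  unfold genHuber; rw [if_pos h]

lemma gh_right {α a b u : ℝ} (h1 : ¬ u < -a) (h2 : b < u) :
    genHuber α a b u = (1 - α) * b * (u - b / 2) := by
  unfold genHuber; rw [if_neg h1, if_pos h2]

lemma gh_mid_neg {α a b u : ℝ} (hα0 : 0 < α) (h1 : ¬ u < -a) (h2 : ¬ b < u) (h3 : ¬ 0 ≤ u) :
    genHuber α a b u = α * u ^ 2 / 2 := by
  unfold genHuber
  rw [if_neg h1, if_neg h2, if_neg h3, abs_of_nonpos (by linarith)]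
  ring

lemma gh_mid_pos {α a b u : ℝ} (hα1 : α < 1) (h1 : ¬ u < -a) (h2 : ¬ b < u) (h3 : 0 ≤ u) :
    genHuber α a b u = (1 - α) * u ^ 2 / 2 := by
  unfold genHuber
  rw [if_neg h1, if_neg h2, if_pos h3, abs_of_nonneg (by linarith)]

lemma genHuber_subgrad (a b α : ℝ) (ha : 0 < a) (hb : 0 < b) (hα0 : 0 < α) (hα1 : α < 1)
    (u v : ℝ) :
    genHuber α a b u + ((1 - α) * min (max u 0) b - α * min (max (-u) 0) a) * (v - u)
      ≤ genHuber α a b v := by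
  have e1 : |(1:ℝ) - α| = 1 - α := abs_of_nonneg (by linarith)
  have e2 : |(0:ℝ) - α| = α := by rw [abs_of_nonpos (by linarith)]; ring
  have hβ : (0:ℝ) ≤ 1 - α := by linarith
  rcases lt_or_ge u (-a) with h1 | h1
  · have hφ : (1 - α) * min (max u 0) b - α * min (max (-u) 0) a = -(α * a) := by
      rw [max_eq_right (by linarith : u ≤ 0), min_eq_left hb.le,
        max_eq_left (by linarith : (0:ℝ) ≤ -u), min_eq_right (by linarith : a ≤ -u)]; ring
    rw [hφ, gh_left h1]
    unfold genHuber; split_ifs with g1 g2 g3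
    · have : -α * a * (u + a / 2) + -(α * a) * (v - u) = -α * a * (v + a / 2) := by ring
      linarith
    · nlinarith [mul_nonneg (by nlinarith : (0:ℝ) ≤ (1-α)*b + α*a) (by linarith : (0:ℝ) ≤ v - b),
        mul_pos (mul_pos hα0 ha) hb, mul_nonneg (mul_nonneg hα0.le ha.le) ha.le,
        mul_nonneg (mul_nonneg hβ hb.le) hb.le]
    · rw [e1]
      nlinarith [mul_nonneg (mul_nonneg hα0.le ha.le) g3,
        mul_nonneg (mul_nonneg hα0.le ha.le) ha.le, mul_nonneg hβ (sq_nonneg v)]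
    · rw [e2]
      nlinarith [mul_nonneg hα0.le (sq_nonneg (v + a))]
  · rcases lt_or_ge u 0 with h2 | h2
    · have hφ : (1 - α) * min (max u 0) b - α * min (max (-u) 0) a = α * u := by
        rw [max_eq_right h2.le, min_eq_left hb.le,
          max_eq_left (by linarith : (0:ℝ) ≤ -u), min_eq_left (by linarith : -u ≤ a)]; ring
      rw [hφ, gh_mid_neg hα0 (not_lt.2 h1) (by push_neg; linarith) (not_le.2 h2)]
      unfold genHuber; split_ifs with g1 g2 g3
      · nlinarith [mul_nonneg hα0.le (sq_nonneg (u + a)),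
          mul_nonneg (mul_nonneg hα0.le (by linarith : (0:ℝ) ≤ u + a)) (by linarith : (0:ℝ) ≤ -a - v)]
      · nlinarith [mul_nonneg (mul_nonneg hα0.le (by linarith : (0:ℝ) ≤ -u)) (by linarith : (0:ℝ) ≤ v),
          mul_nonneg hα0.le (sq_nonneg u),
          mul_nonneg (mul_nonneg hβ hb.le) (by linarith : (0:ℝ) ≤ v - b/2)]
      · rw [e1]
        nlinarith [mul_nonneg (mul_nonneg hα0.le (by linarith : (0:ℝ) ≤ -u)) g3,
          mul_nonneg hα0.le (sq_nonneg u), mul_nonneg hβ (sq_nonneg v)]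
      · rw [e2]
        nlinarith [mul_nonneg hα0.le (sq_nonneg (v - u))]
    · rcases le_or_gt u b with h3 | h3
      · have hφ : (1 - α) * min (max u 0) b - α * min (max (-u) 0) a = (1 - α) * u := by
          rw [max_eq_left h2, min_eq_left h3,
            max_eq_right (by linarith : -u ≤ 0), min_eq_left ha.le]; ring
        rw [hφ, gh_mid_pos hα1 (by push_neg; linarith) (not_lt.2 h3) h2]
        unfold genHuber; split_ifs with g1 g2 g3
        · nlinarith [mul_nonneg (mul_nonneg hβ h2) (by linarith : (0:ℝ) ≤ -v),
            mul_nonneg hβ (sq_nonneg u),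
            mul_nonneg (mul_nonneg hα0.le ha.le) (by linarith : (0:ℝ) ≤ -a - v),
            mul_nonneg (mul_nonneg hα0.le ha.le) ha.le]
        · nlinarith [mul_nonneg (mul_nonneg hβ (by linarith : (0:ℝ) ≤ b - u))
            (by linarith : (0:ℝ) ≤ 2*v - b - u)]
        · rw [e1]
          nlinarith [mul_nonneg hβ (sq_nonneg (v - u))]
        · rw [e2]
          nlinarith [mul_nonneg hα0.le (sq_nonneg v),
            mul_nonneg (mul_nonneg hβ h2) (by linarith : (0:ℝ) ≤ -v),
            mul_nonneg hβ (sq_nonneg u)]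
      · have hφ : (1 - α) * min (max u 0) b - α * min (max (-u) 0) a = (1 - α) * b := by
          rw [max_eq_left h2, min_eq_right h3.le,
            max_eq_right (by linarith : -u ≤ 0), min_eq_left ha.le]; ring
        rw [hφ, gh_right (by push_neg; linarith) h3]
        unfold genHuber; split_ifs with g1 g2 g3
        · nlinarith [mul_nonneg (mul_nonneg hβ hb.le) (by linarith : (0:ℝ) ≤ b/2 - v),
            mul_nonneg (mul_nonneg hα0.le ha.le) (by linarith : (0:ℝ) ≤ -a - v),
            mul_nonneg (mul_nonneg hα0.le ha.le) ha.le]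
        · have : (1 - α) * b * (u - b / 2) + (1 - α) * b * (v - u)
              = (1 - α) * b * (v - b / 2) := by ring
          linarith
        · rw [e1]
          nlinarith [mul_nonneg hβ (sq_nonneg (v - b))]
        · rw [e2]
          nlinarith [mul_nonneg (mul_nonneg hβ hb.le) (by linarith : (0:ℝ) ≤ b/2 - v),
            mul_nonneg hα0.le (sq_nonneg v)]


lemma genHuber_abs_le (a b α u : ℝ) (ha : 0 < a) (hb : 0 < b) (hα0 : 0 < α) (hα1 : α < 1) :
    |genHuber α a b u| ≤ a * (|u| + a) + b * (|u| + b) + u ^ 2 / 2 := by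
  have e1 : |(1:ℝ) - α| = 1 - α := abs_of_nonneg (by linarith)
  have e2 : |(0:ℝ) - α| = α := by rw [abs_of_nonpos (by linarith)]; ring
  have hβ : (0:ℝ) ≤ 1 - α := by linarith
  unfold genHuber
  split_ifs with g1 g2 g3 <;> (try simp only [e1, e2]) <;> rw [abs_le] <;> constructor <;>
    nlinarith [le_abs_self u, neg_le_abs u, abs_nonneg u, sq_nonneg u,
      mul_nonneg (mul_nonneg ha.le hα0.le) (sub_nonneg.2 (le_abs_self u)),
      mul_nonneg (mul_nonneg ha.le hα0.le) (sub_nonneg.2 (neg_le_abs u)),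
      mul_nonneg (mul_nonneg hb.le hα0.le) (sub_nonneg.2 (le_abs_self u)),
      mul_nonneg (mul_nonneg hb.le hα0.le) (sub_nonneg.2 (neg_le_abs u)),
      mul_nonneg (mul_nonneg ha.le hβ) (sub_nonneg.2 (le_abs_self u)),
      mul_nonneg (mul_nonneg ha.le hβ) (sub_nonneg.2 (neg_le_abs u)),
      mul_nonneg (mul_nonneg hb.le hβ) (sub_nonneg.2 (le_abs_self u)),
      mul_nonneg (mul_nonneg hb.le hβ) (sub_nonneg.2 (neg_le_abs u)),
      mul_nonneg (mul_nonneg ha.le ha.le) hα0.le,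
      mul_nonneg (mul_nonneg ha.le ha.le) hβ,
      mul_nonneg (mul_nonneg hb.le hb.le) hα0.le,
      mul_nonneg (mul_nonneg hb.le hb.le) hβ,
      mul_nonneg hα0.le (sq_nonneg u), mul_nonneg hβ (sq_nonneg u),
      mul_nonneg ha.le (abs_nonneg u), mul_nonneg hb.le (abs_nonneg u)]


lemma measurable_genHuber (α a b : ℝ) : Measurable (genHuber α a b) := by
  unfold genHuber
  apply Measurable.ite (measurableSet_lt measurable_id measurable_const)
  · fun_prop
  apply Measurable.ite (measurableSet_lt measurable_const measurable_id)
  · fun_prop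
  apply Measurable.div _ measurable_const
  apply Measurable.mul _ (by fun_prop)
  apply Measurable.abs
  apply Measurable.sub _ measurable_const
  exact Measurable.ite (measurableSet_le measurable_const measurable_id) measurable_const
    measurable_const


/-- Generalized Huber loss is consistent for the Huber functional: for a compactly
supported probability distribution `F`, any `t ∈ H^α_{a,b}(F)` minimizes the expected
generalized Huber loss score. -/
theorem stmt19 (a b α : ℝ) (ha : 0 < a) (hb : 0 < b) (hα : α ∈ Set.Ioo (0 : ℝ) 1)
    (μ : Measure ℝ) [IsProbabilityMeasure μ]
    (K : Set ℝ) (hK : IsCompact K) (hμK : μ Kᶜ = 0) (t x : ℝ)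
    (ht : α * ∫ y, min (max (y - t) 0) a ∂μ = (1 - α) * ∫ y, min (max (t - y) 0) b ∂μ) :
    ∫ y, genHuber α a b (t - y) ∂μ ≤ ∫ y, genHuber α a b (x - y) ∂μ := by
  obtain ⟨hα0, hα1⟩ := hα
  have haeK : ∀ᵐ y ∂μ, y ∈ K := by
    rw [MeasureTheory.ae_iff]
    exact hμK
  obtain ⟨R, hR⟩ := hK.isBounded.subset_closedBall 0
  -- integrability of the score functions
  have hint : ∀ c : ℝ, Integrable (fun y => genHuber α a b (c - y)) μ := by
    intro c
    have hmeas : Measurable fun y => genHuber α a b (c - y) :=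
      (measurable_genHuber α a b).comp (measurable_const.sub measurable_id)
    refine Integrable.mono' (integrable_const
      (a * ((|c| + |R|) + a) + b * ((|c| + |R|) + b) + (|c| + |R|) ^ 2 / 2))
      hmeas.aestronglyMeasurable ?_
    filter_upwards [haeK] with y hy
    have hyR : |y| ≤ |R| := by
      have := hR hy
      rw [Real.closedBall_eq_Icc] at this
      rcases abs_cases R with ⟨h1, _⟩ | ⟨h1, _⟩ <;> rw [abs_le] <;>
        constructor <;> simp at this <;> linarith [this.1, this.2]
    have hcy : |c - y| ≤ |c| + |R| := (abs_sub c y).trans (by linarith)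
    rw [Real.norm_eq_abs]
    refine (genHuber_abs_le a b α (c - y) ha hb hα0 hα1).trans ?_
    have h2 : (c - y) ^ 2 ≤ (|c| + |R|) ^ 2 := by
      rw [← sq_abs]
      exact pow_le_pow_left₀ (abs_nonneg _) hcy 2
    nlinarith [abs_nonneg (c - y)]
  have hg1 : Integrable (fun y => min (max (y - t) 0) a) μ := by
    refine Integrable.mono' (integrable_const a)
      ((by fun_prop : Continuous fun y : ℝ => min (max (y - t) 0) a)).aestronglyMeasurable ?_
    filter_upwards with y
    rw [Real.norm_eq_abs, abs_of_nonneg (le_min (le_max_right _ 0) ha.le)]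
    exact min_le_right _ _
  have hg2 : Integrable (fun y => min (max (t - y) 0) b) μ := by
    refine Integrable.mono' (integrable_const b)
      ((by fun_prop : Continuous fun y : ℝ => min (max (t - y) 0) b)).aestronglyMeasurable ?_
    filter_upwards with y
    rw [Real.norm_eq_abs, abs_of_nonneg (le_min (le_max_right _ 0) hb.le)]
    exact min_le_right _ _
  -- pointwise subgradient inequality
  have key : ∀ y : ℝ, genHuber α a b (t - y)
      + ((1 - α) * min (max (t - y) 0) b - α * min (max (y - t) 0) a) * (x - t)
      ≤ genHuber α a b (x - y) := by
    intro y
    have := genHuber_subgrad a b α ha hb hα0 hα1 (t - y) (x - y)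
    rw [neg_sub] at this
    convert this using 3 <;> ring
  -- the φ-term integrates to zero
  have hφint : Integrable
      (fun y => ((1 - α) * min (max (t - y) 0) b - α * min (max (y - t) 0) a) * (x - t)) μ :=
    ((hg2.const_mul _).sub (hg1.const_mul _)).mul_const _
  have hzero : ∫ y, ((1 - α) * min (max (t - y) 0) b - α * min (max (y - t) 0) a) * (x - t) ∂μ
      = 0 := by
    rw [integral_mul_const, integral_sub (hg2.const_mul _) (hg1.const_mul _),
      integral_const_mul, integral_const_mul, ← ht]
    ring
  calc ∫ y, genHuber α a b (t - y) ∂μ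
      = ∫ y, (genHuber α a b (t - y)
          + ((1 - α) * min (max (t - y) 0) b - α * min (max (y - t) 0) a) * (x - t)) ∂μ := by
        rw [integral_add (hint t) hφint, hzero, add_zero]
    _ ≤ ∫ y, genHuber α a b (x - y) ∂μ :=
        integral_mono ((hint t).add hφint) (hint x) key
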